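/- Let (V_k)_{k≥0} be nonnegative random variables, all with the same distribution as a random variable V (no independence is assumed), and suppose lim_{t→∞} log ℙ(V > t)/log t = −α for some α ∈ (0, 1]. Then for every β > 1/α one has limsup_{n→∞} log ℙ(Σ_{k=0}^{n−1} V_k ≥ n^β)/log n ≤ 1 − αβ. -/

import Mathlib

open MeasureTheory Filter

/-- **Sum of identically distributed heavy-tailed variables (Term B estimate).**
Let `(V_k)_{k≥0}` be nonnegative random variables, each distributed as `V`
(no independence assumed), with `lim_{t→∞} log P(V > t)/log t = -α`, `α ∈ (0,1]`.
Then for every `β > 1/α`,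
`limsup_n log P(Σ_{k<n} V_k ≥ n^β)/log n ≤ 1 - αβ`. -/

private lemma min_le_levels (s : ℕ → ℝ) (hs : Monotone s) (h0 : 0 ≤ s 0) :
    ∀ (J : ℕ) (v : ℝ), min v (s J) ≤
      s 0 + ∑ j ∈ Finset.range J, s (j+1) * (if s j < v then 1 else 0) := by
  intro J
  induction J with
  | zero => intro v; simpa using min_le_right v (s 0)
  | succ J ih =>
    intro v
    rw [Finset.sum_range_succ]
    have hsum : 0 ≤ ∑ j ∈ Finset.range J, s (j+1) * (if s j < v then 1 else 0) := by
      apply Finset.sum_nonneg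
      intro j _
      have h1 : 0 ≤ s (j+1) := le_trans h0 (hs (Nat.zero_le _))
      split_ifs <;> simp [h1]
    by_cases h : s J < v
    · have h1 : min v (s (J+1)) ≤ s (J+1) := min_le_right _ _
      rw [if_pos h]
      linarith
    · push_neg at h
      have heq : min v (s (J+1)) = min v (s J) := by
        rw [min_eq_left (le_trans h (hs (Nat.le_succ J))), min_eq_left h]
      rw [heq, if_neg (not_lt.mpr h)]
      have := ih v
      linarith

private lemma sum_trunc (n : ℕ) (T : ℝ) (hT : 0 ≤ T) (g : ℕ → ℝ) (hg : ∀ k, 0 ≤ g k)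
    (h : T ≤ ∑ k ∈ Finset.range n, g k) : T ≤ ∑ k ∈ Finset.range n, min (g k) T := by
  by_cases hb : ∀ k ∈ Finset.range n, g k ≤ T
  · calc T ≤ ∑ k ∈ Finset.range n, g k := h
      _ = ∑ k ∈ Finset.range n, min (g k) T := by
          refine Finset.sum_congr rfl fun k hk => ?_
          rw [min_eq_left (hb k hk)]
  · push_neg at hb
    obtain ⟨k₀, hk₀, hgt⟩ := hb
    calc T = min (g k₀) T := (min_eq_right hgt.le).symm
      _ ≤ ∑ k ∈ Finset.range n, min (g k) T :=
        Finset.single_le_sum (fun k _ => le_min (hg k) hT) hk₀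

private lemma core_bound
    {Ω : Type*} [MeasurableSpace Ω] (P : Measure Ω) [IsProbabilityMeasure P]
    (V : ℕ → Ω → ℝ) (Vlim : Ω → ℝ)
    (hmeas : ∀ k, Measurable (V k)) (hVmeas : Measurable Vlim)
    (hnonneg : ∀ k ω, 0 ≤ V k ω)
    (hident : ∀ k, ProbabilityTheory.IdentDistrib (V k) Vlim P P)
    (α β ε c : ℝ) (hα0 : 0 < α) (hα1 : α ≤ 1) (hβ : 0 < β) (hε : 0 < ε) (hc : 0 < c)
    (J : ℕ) (hJc : ((J:ℝ)+1)*c = β)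
    (n : ℕ) (hn : 1 ≤ n)
    (htail_pt : ∀ t : ℝ, (n:ℝ)^c ≤ t → (P {ω | Vlim ω > t}).toReal ≤ t ^ (-α+ε)) :
    (P {ω | (n : ℝ) ^ β ≤ ∑ k ∈ Finset.range n, V k ω}).toReal ≤
      ((J:ℝ)+1) * (n:ℝ) ^ (1 - α*β + (c + ε*β)) := by
  have hn1 : (1:ℝ) ≤ (n:ℝ) := by exact_mod_cast hn
  have hn0 : (0:ℝ) < (n:ℝ) := by linarith
  set T : ℝ := (n:ℝ)^β with hT
  have hT0 : 0 < T := Real.rpow_pos_of_pos hn0 β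
  set s : ℕ → ℝ := fun j => (n:ℝ) ^ (((j:ℝ)+1)*c) with hs
  have hsmono : Monotone s := by
    intro a b hab
    apply Real.rpow_le_rpow_of_exponent_le hn1
    have : (a:ℝ) ≤ b := by exact_mod_cast hab
    nlinarith
  have hs0 : ∀ j, 0 < s j := fun j => Real.rpow_pos_of_pos hn0 _
  have hsJ : s J = T := by
    rw [hs, hT]; simp only []; rw [hJc]
  set G : ℝ → ℝ := fun t => (P {ω | Vlim ω > t}).toReal with hG
  have hGnn : ∀ t, 0 ≤ G t := fun t => ENNReal.toReal_nonneg
  -- Markov step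
  set Fn : Ω → ENNReal := fun ω => ∑ k ∈ Finset.range n, ENNReal.ofReal (min (V k ω) T) with hFn
  have hFnmeas : Measurable Fn := by
    apply Finset.measurable_sum
    intro k _
    exact ENNReal.measurable_ofReal.comp ((hmeas k).min measurable_const)
  have hsub : {ω | T ≤ ∑ k ∈ Finset.range n, V k ω} ⊆ {ω | ENNReal.ofReal T ≤ Fn ω} := by
    intro ω hω
    have h1 : T ≤ ∑ k ∈ Finset.range n, min (V k ω) T :=
      sum_trunc n T hT0.le (fun k => V k ω) (fun k => hnonneg k ω) hω
    have h2 := ENNReal.ofReal_le_ofReal h1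
    rwa [ENNReal.ofReal_sum_of_nonneg (fun k _ => le_min (hnonneg k ω) hT0.le)] at h2
  have markov : ENNReal.ofReal T * P {ω | T ≤ ∑ k ∈ Finset.range n, V k ω}
      ≤ ∫⁻ ω, Fn ω ∂P :=
    le_trans (mul_le_mul_right (measure_mono hsub) _)
      (mul_meas_ge_le_lintegral₀ hFnmeas.aemeasurable _)
  -- identically distributed: reduce to Vlim
  have hgm : Measurable fun x : ℝ => ENNReal.ofReal (min x T) :=
    ENNReal.measurable_ofReal.comp (measurable_id.min measurable_const)
  have hlin : ∫⁻ ω, Fn ω ∂P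
      = (n : ENNReal) * ∫⁻ ω, ENNReal.ofReal (min (Vlim ω) T) ∂P := by
    have h1 : ∫⁻ ω, Fn ω ∂P
        = ∑ k ∈ Finset.range n, ∫⁻ ω, ENNReal.ofReal (min (V k ω) T) ∂P :=
      lintegral_finset_sum _ (fun k _ => hgm.comp (hmeas k))
    rw [h1]
    have heach : ∀ k ∈ Finset.range n, (∫⁻ ω, ENNReal.ofReal (min (V k ω) T) ∂P)
        = ∫⁻ ω, ENNReal.ofReal (min (Vlim ω) T) ∂P := by
      intro k _
      rw [← lintegral_map hgm (hmeas k), (hident k).map_eq, lintegral_map hgm hVmeas]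
    rw [Finset.sum_congr rfl heach, Finset.sum_const, Finset.card_range, nsmul_eq_mul]
  -- level bound on the single-variable integral
  have hmset : ∀ j : ℕ, MeasurableSet {ω | s j < Vlim ω} :=
    fun j => measurableSet_lt measurable_const hVmeas
  have hIbound : ∫⁻ ω, ENNReal.ofReal (min (Vlim ω) T) ∂P ≤
      ENNReal.ofReal (s 0) + ∑ j ∈ Finset.range J,
        ENNReal.ofReal (s (j+1)) * P {ω | s j < Vlim ω} := by
    have hpt : ∀ ω, ENNReal.ofReal (min (Vlim ω) T) ≤
        ENNReal.ofReal (s 0) + ∑ j ∈ Finset.range J,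
          Set.indicator {ω' | s j < Vlim ω'} (fun _ => ENNReal.ofReal (s (j+1))) ω := by
      intro ω
      have h1 := min_le_levels s hsmono (hs0 0).le J (Vlim ω)
      rw [hsJ] at h1
      calc ENNReal.ofReal (min (Vlim ω) T)
          ≤ ENNReal.ofReal (s 0 + ∑ j ∈ Finset.range J,
              s (j+1) * (if s j < Vlim ω then 1 else 0)) := ENNReal.ofReal_le_ofReal h1
        _ = _ := by
          rw [ENNReal.ofReal_add (hs0 0).le
              (Finset.sum_nonneg (fun j _ => by split_ifs <;> simp [(hs0 (j+1)).le])),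
            ENNReal.ofReal_sum_of_nonneg (fun j _ => by split_ifs <;> simp [(hs0 (j+1)).le])]
          congr 1
          refine Finset.sum_congr rfl fun j _ => ?_
          by_cases hmem : s j < Vlim ω
          · simp [Set.indicator_apply, Set.mem_setOf_eq, hmem]
          · simp [Set.indicator_apply, Set.mem_setOf_eq, hmem]
    calc ∫⁻ ω, ENNReal.ofReal (min (Vlim ω) T) ∂P
        ≤ ∫⁻ ω, (ENNReal.ofReal (s 0) + ∑ j ∈ Finset.range J,
            Set.indicator {ω' | s j < Vlim ω'} (fun _ => ENNReal.ofReal (s (j+1))) ω) ∂P :=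
          lintegral_mono hpt
      _ = ENNReal.ofReal (s 0) + ∑ j ∈ Finset.range J,
            ENNReal.ofReal (s (j+1)) * P {ω | s j < Vlim ω} := by
          rw [lintegral_add_left measurable_const, lintegral_const, measure_univ, mul_one,
            lintegral_finset_sum _ (fun j _ => measurable_const.indicator (hmset j))]
          refine congrArg (_ + ·) (Finset.sum_congr rfl fun j _ => ?_)
          exact lintegral_indicator_const (hmset j) _
  have hPj : ∀ j : ℕ, P {ω | s j < Vlim ω} = ENNReal.ofReal (G (s j)) := fun j =>
    (ENNReal.ofReal_toReal (measure_ne_top P _)).symm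
  -- real-valued final bound
  set e : ℝ := 1 - α*β + (c + ε*β) with he
  set C : ℝ := (n:ℝ) * (s 0 + ∑ j ∈ Finset.range J, s (j+1) * G (s j)) with hC
  have hCnn : 0 ≤ C := by
    apply mul_nonneg hn0.le
    apply add_nonneg (hs0 0).le
    exact Finset.sum_nonneg fun j _ => mul_nonneg (hs0 (j+1)).le (hGnn _)
  have hofC : ENNReal.ofReal C = (n : ENNReal) * (ENNReal.ofReal (s 0) +
      ∑ j ∈ Finset.range J, ENNReal.ofReal (s (j+1)) * ENNReal.ofReal (G (s j))) := by
    rw [hC, ENNReal.ofReal_mul hn0.le, ENNReal.ofReal_natCast,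
      ENNReal.ofReal_add (hs0 0).le
        (Finset.sum_nonneg fun j _ => mul_nonneg (hs0 (j+1)).le (hGnn _)),
      ENNReal.ofReal_sum_of_nonneg (fun j _ => mul_nonneg (hs0 (j+1)).le (hGnn _))]
    congr 2
    refine Finset.sum_congr rfl fun j _ => ?_
    rw [ENNReal.ofReal_mul (hs0 (j+1)).le]
  -- exponent estimates
  have hsjlb : ∀ j : ℕ, (n:ℝ)^c ≤ s j := by
    intro j
    apply Real.rpow_le_rpow_of_exponent_le hn1
    nlinarith [Nat.cast_nonneg (α := ℝ) j]
  have hterm_base : (n:ℝ) * s 0 ≤ T * (n:ℝ)^e := by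
    have h1 : (n:ℝ) * s 0 = (n:ℝ) ^ ((1:ℝ) + ((0:ℝ)+1)*c) := by
      rw [Real.rpow_add hn0, Real.rpow_one]
      norm_num [hs]
    have h2 : T * (n:ℝ)^e = (n:ℝ) ^ (β + e) := by
      rw [hT]; exact (Real.rpow_add hn0 β e).symm
    rw [h1, h2]
    apply Real.rpow_le_rpow_of_exponent_le hn1
    rw [he]
    nlinarith
  have hterm : ∀ j ∈ Finset.range J, (n:ℝ) * (s (j+1) * G (s j)) ≤ T * (n:ℝ)^e := by
    intro j hj
    have hjJ : (j:ℝ) + 1 ≤ (J:ℝ) := by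
      have := Finset.mem_range.mp hj
      exact_mod_cast this
    have hu : ((j:ℝ)+1)*c ≤ β := by nlinarith
    have hGle : G (s j) ≤ (s j) ^ (-α+ε) := htail_pt (s j) (hsjlb j)
    have step1 : (n:ℝ) * (s (j+1) * G (s j)) ≤ (n:ℝ) * (s (j+1) * (s j) ^ (-α+ε)) := by
      apply mul_le_mul_of_nonneg_left _ hn0.le
      exact mul_le_mul_of_nonneg_left hGle (hs0 (j+1)).le
    have step2 : (n:ℝ) * (s (j+1) * (s j) ^ (-α+ε))
        = (n:ℝ) ^ ((1:ℝ) + ((((j:ℝ)+1)+1)*c + (((j:ℝ)+1)*c)*(-α+ε))) := by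
      rw [Real.rpow_add hn0, Real.rpow_add hn0, Real.rpow_one, hs]
      simp only []
      rw [← Real.rpow_mul hn0.le]
      push_cast
      ring_nf
    have step3 : (n:ℝ) ^ ((1:ℝ) + ((((j:ℝ)+1)+1)*c + (((j:ℝ)+1)*c)*(-α+ε))) ≤ (n:ℝ)^(β+e) := by
      apply Real.rpow_le_rpow_of_exponent_le hn1
      rw [he]
      nlinarith [mul_le_mul_of_nonneg_right hu (by linarith : (0:ℝ) ≤ 1 - α + ε)]
    have h2 : T * (n:ℝ)^e = (n:ℝ) ^ (β + e) := by
      rw [hT]; exact (Real.rpow_add hn0 β e).symm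
    rw [h2]
    calc (n:ℝ) * (s (j+1) * G (s j)) ≤ _ := step1
      _ = _ := step2
      _ ≤ _ := step3
  have hCle : C ≤ T * (((J:ℝ)+1) * (n:ℝ)^e) := by
    have hsum : ∑ j ∈ Finset.range J, (n:ℝ) * (s (j+1) * G (s j)) ≤ (J:ℕ) • (T * (n:ℝ)^e) := by
      have := Finset.sum_le_card_nsmul (Finset.range J)
        (fun j => (n:ℝ) * (s (j+1) * G (s j))) (T * (n:ℝ)^e) hterm
      rwa [Finset.card_range] at this
    rw [nsmul_eq_mul] at hsum
    have hexp : C = (n:ℝ) * s 0 + ∑ j ∈ Finset.range J, (n:ℝ) * (s (j+1) * G (s j)) := by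
      rw [hC, mul_add, Finset.mul_sum]
    rw [hexp]
    nlinarith [hterm_base]
  -- put it together
  have hchain : ENNReal.ofReal T * P {ω | T ≤ ∑ k ∈ Finset.range n, V k ω}
      ≤ ENNReal.ofReal T * ENNReal.ofReal (((J:ℝ)+1) * (n:ℝ)^e) := by
    calc ENNReal.ofReal T * P {ω | T ≤ ∑ k ∈ Finset.range n, V k ω}
        ≤ ∫⁻ ω, Fn ω ∂P := markov
      _ = (n : ENNReal) * ∫⁻ ω, ENNReal.ofReal (min (Vlim ω) T) ∂P := hlin
      _ ≤ (n : ENNReal) * (ENNReal.ofReal (s 0) + ∑ j ∈ Finset.range J,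
            ENNReal.ofReal (s (j+1)) * P {ω | s j < Vlim ω}) := by
          exact mul_le_mul_right hIbound _
      _ = ENNReal.ofReal C := by
          rw [hofC]
          congr 1
          congr 1
          exact Finset.sum_congr rfl fun j _ => by rw [hPj j]
      _ ≤ ENNReal.ofReal (T * (((J:ℝ)+1) * (n:ℝ)^e)) := ENNReal.ofReal_le_ofReal hCle
      _ = ENNReal.ofReal T * ENNReal.ofReal (((J:ℝ)+1) * (n:ℝ)^e) := by
          rw [ENNReal.ofReal_mul hT0.le]
  have hcancel : P {ω | T ≤ ∑ k ∈ Finset.range n, V k ω}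
      ≤ ENNReal.ofReal (((J:ℝ)+1) * (n:ℝ)^e) :=
    (ENNReal.mul_le_mul_iff_right (ne_of_gt (ENNReal.ofReal_pos.mpr hT0))
      ENNReal.ofReal_ne_top).mp hchain
  exact ENNReal.toReal_le_of_le_ofReal (by positivity) hcancel

private lemma tail_ub (G : ℝ → ℝ) (hGnn : ∀ t, 0 ≤ G t) (α : ℝ)
    (htail : Tendsto (fun t : ℝ => Real.log (G t) / Real.log t) atTop (nhds (-α)))
    (ε : ℝ) (hε : 0 < ε) :
    ∀ᶠ t : ℝ in atTop, G t ≤ t ^ (-α + ε) := by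
  have h1 : ∀ᶠ t : ℝ in atTop, Real.log (G t) / Real.log t < -α + ε :=
    htail.eventually_lt_const (by linarith)
  filter_upwards [h1, eventually_gt_atTop (1:ℝ)] with t ht hlt
  have hlogt : 0 < Real.log t := Real.log_pos hlt
  have h2 : Real.log (G t) < (-α + ε) * Real.log t := (div_lt_iff₀ hlogt).mp ht
  rcases eq_or_lt_of_le (hGnn t) with h0 | h0
  · rw [← h0]; positivity
  · have := Real.exp_le_exp.mpr h2.le
    rw [Real.exp_log h0] at this
    calc G t ≤ Real.exp ((-α + ε) * Real.log t) := this
      _ = t ^ (-α + ε) := by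
        rw [Real.rpow_def_of_pos (by linarith), mul_comm]

private lemma tail_lb (G : ℝ → ℝ) (hGnn : ∀ t, 0 ≤ G t) (α : ℝ) (hα : 0 < α)
    (htail : Tendsto (fun t : ℝ => Real.log (G t) / Real.log t) atTop (nhds (-α))) :
    ∀ᶠ t : ℝ in atTop, 0 < G t ∧ t ^ (-(α+1)) ≤ G t := by
  have h1 : ∀ᶠ t : ℝ in atTop, Real.log (G t) / Real.log t < -α/2 :=
    htail.eventually_lt_const (by linarith)
  have h2 : ∀ᶠ t : ℝ in atTop, -(α+1) < Real.log (G t) / Real.log t :=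
    htail.eventually_const_lt (by linarith)
  filter_upwards [h1, h2, eventually_gt_atTop (1:ℝ)] with t ht1 ht2 hlt
  have hlogt : 0 < Real.log t := Real.log_pos hlt
  have hneg : Real.log (G t) < (-α/2) * Real.log t := (div_lt_iff₀ hlogt).mp ht1
  have hGpos : 0 < G t := by
    rcases eq_or_lt_of_le (hGnn t) with h0 | h0
    · exfalso; rw [← h0] at hneg; simp only [Real.log_zero] at hneg; nlinarith
    · exact h0
  refine ⟨hGpos, ?_⟩
  have h3 : -(α+1) * Real.log t < Real.log (G t) := (lt_div_iff₀ hlogt).mp ht2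
  have := Real.exp_le_exp.mpr h3.le
  rw [Real.exp_log hGpos] at this
  calc t ^ (-(α+1)) = Real.exp (-(α+1) * Real.log t) := by
        rw [Real.rpow_def_of_pos (by linarith), mul_comm]
    _ ≤ G t := this


theorem sum_identically_distributed_heavy_tail
    {Ω : Type*} [MeasurableSpace Ω] (P : Measure Ω) [IsProbabilityMeasure P]
    (V : ℕ → Ω → ℝ) (Vlim : Ω → ℝ)
    (hmeas : ∀ k, Measurable (V k)) (hVmeas : Measurable Vlim)
    (hnonneg : ∀ k ω, 0 ≤ V k ω)
    (hident : ∀ k, ProbabilityTheory.IdentDistrib (V k) Vlim P P)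
    (α : ℝ) (hα : α ∈ Set.Ioc (0 : ℝ) 1)
    (htail : Tendsto (fun t : ℝ => Real.log (P {ω | Vlim ω > t}).toReal / Real.log t)
      atTop (nhds (-α)))
    (β : ℝ) (hβ : 1 / α < β) :
    limsup (fun n : ℕ =>
      Real.log (P {ω | (n : ℝ) ^ β ≤ ∑ k ∈ Finset.range n, V k ω}).toReal
        / Real.log n) atTop ≤ 1 - α * β := by
  obtain ⟨hα0, hα1⟩ := hα
  have hβ0 : 0 < β := lt_trans (by positivity) hβ
  set G : ℝ → ℝ := fun t => (P {ω | Vlim ω > t}).toReal with hGdef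
  have hGnn : ∀ t, 0 ≤ G t := fun t => ENNReal.toReal_nonneg
  set f : ℕ → ℝ := fun n : ℕ =>
      Real.log (P {ω | (n : ℝ) ^ β ≤ ∑ k ∈ Finset.range n, V k ω}).toReal
        / Real.log n with hfdef
  have hnb : Tendsto (fun n : ℕ => (n:ℝ)^β) atTop atTop :=
    (tendsto_rpow_atTop hβ0).comp tendsto_natCast_atTop_atTop
  -- eventual lower bound on the probability (positivity + polynomial lower bound)
  have hlow : ∀ᶠ n : ℕ in atTop,
      0 < (P {ω | (n : ℝ) ^ β ≤ ∑ k ∈ Finset.range n, V k ω}).toReal ∧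
      (n:ℝ) ^ (β * (-(α+1))) ≤
        (P {ω | (n : ℝ) ^ β ≤ ∑ k ∈ Finset.range n, V k ω}).toReal := by
    have h1 := hnb.eventually (tail_lb G hGnn α hα0 htail)
    filter_upwards [h1, eventually_ge_atTop 1] with n hn hn1
    obtain ⟨hpos, hlb⟩ := hn
    have hsub : {ω | (n:ℝ)^β < V 0 ω} ⊆
        {ω | (n : ℝ) ^ β ≤ ∑ k ∈ Finset.range n, V k ω} := by
      intro ω hω
      have h2 : V 0 ω ≤ ∑ k ∈ Finset.range n, V k ω :=
        Finset.single_le_sum (fun k _ => hnonneg k ω) (Finset.mem_range.mpr hn1)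
      exact le_trans (le_of_lt hω) h2
    have hPeq : P {ω | (n:ℝ)^β < V 0 ω} = P {ω | Vlim ω > (n:ℝ)^β} := by
      have e1 : {ω | (n:ℝ)^β < V 0 ω} = V 0 ⁻¹' (Set.Ioi ((n:ℝ)^β)) := rfl
      have e2 : {ω | Vlim ω > (n:ℝ)^β} = Vlim ⁻¹' (Set.Ioi ((n:ℝ)^β)) := rfl
      rw [e1, e2, ← Measure.map_apply (hmeas 0) measurableSet_Ioi,
        ← Measure.map_apply hVmeas measurableSet_Ioi, (hident 0).map_eq]
    have hmono : G ((n:ℝ)^β) ≤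
        (P {ω | (n : ℝ) ^ β ≤ ∑ k ∈ Finset.range n, V k ω}).toReal := by
      apply ENNReal.toReal_mono (measure_ne_top P _)
      rw [← hPeq]
      exact measure_mono hsub
    refine ⟨lt_of_lt_of_le hpos hmono, ?_⟩
    calc (n:ℝ)^(β * (-(α+1))) = ((n:ℝ)^β)^(-(α+1)) :=
          Real.rpow_mul (Nat.cast_nonneg n) β _
      _ ≤ G ((n:ℝ)^β) := hlb
      _ ≤ _ := hmono
  -- cobounded below
  have hflow : ∀ᶠ n : ℕ in atTop, β * (-(α+1)) ≤ f n := by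
    filter_upwards [hlow, eventually_gt_atTop 1] with n hn hn1
    obtain ⟨hpos, hlb⟩ := hn
    have hn1R : (1:ℝ) < (n:ℝ) := by exact_mod_cast hn1
    have hn0R : (0:ℝ) < (n:ℝ) := by linarith
    have hlogn : 0 < Real.log n := Real.log_pos hn1R
    have h1 : Real.log ((n:ℝ)^(β*(-(α+1)))) ≤
        Real.log (P {ω | (n : ℝ) ^ β ≤ ∑ k ∈ Finset.range n, V k ω}).toReal :=
      Real.log_le_log (Real.rpow_pos_of_pos hn0R _) hlb
    rw [Real.log_rpow hn0R] at h1
    calc β*(-(α+1)) = (β*(-(α+1)) * Real.log n)/Real.log n := by field_simp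
      _ ≤ f n := by
          rw [hfdef]
          exact (div_le_div_iff_of_pos_right hlogn).mpr h1
  have hcob : IsCoboundedUnder (· ≤ ·) atTop f :=
    isCoboundedUnder_le_of_eventually_le atTop hflow
  -- the key estimate
  have key : ∀ δ : ℝ, 0 < δ → limsup f atTop ≤ 1 - α*β + 2*δ := by
    intro δ hδ
    set ε : ℝ := δ/(2*β) with hε
    have hε0 : 0 < ε := by positivity
    set J : ℕ := ⌈2*β/δ⌉₊ with hJ
    have hJge : 2*β/δ ≤ (J:ℝ) := Nat.le_ceil _
    set c : ℝ := β/((J:ℝ)+1) with hc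
    have hJ1 : (0:ℝ) < (J:ℝ)+1 := by positivity
    have hc0 : 0 < c := by positivity
    have hJc : ((J:ℝ)+1)*c = β := by rw [hc]; field_simp
    have hcδ : c < δ/2 := by
      rw [hc, div_lt_iff₀ hJ1]
      have h2 : 2*β/δ < (J:ℝ)+1 := by linarith
      rw [div_lt_iff₀ hδ] at h2
      linarith
    have hεβ : ε*β = δ/2 := by rw [hε]; field_simp
    have hδsum : c + ε*β ≤ δ := by linarith
    obtain ⟨t₀, ht₀⟩ := eventually_atTop.mp (tail_ub G hGnn α htail ε hε0)
    have hnc : Tendsto (fun n : ℕ => (n:ℝ)^c) atTop atTop :=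
      (tendsto_rpow_atTop hc0).comp tendsto_natCast_atTop_atTop
    have hEbound : ∀ᶠ n : ℕ in atTop,
        (P {ω | (n : ℝ) ^ β ≤ ∑ k ∈ Finset.range n, V k ω}).toReal ≤
          ((J:ℝ)+1) * (n:ℝ) ^ (1 - α*β + (c + ε*β)) := by
      filter_upwards [hnc.eventually_ge_atTop t₀, eventually_ge_atTop 1] with n h1 h2
      exact core_bound P V Vlim hmeas hVmeas hnonneg hident α β ε c hα0 hα1 hβ0 hε0 hc0
        J hJc n h2 (fun t ht => ht₀ t (le_trans h1 ht))
    have hJlog : Tendsto (fun n : ℕ => Real.log ((J:ℝ)+1) / Real.log n) atTop (nhds 0) :=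
      Tendsto.div_atTop tendsto_const_nhds
        (Real.tendsto_log_atTop.comp tendsto_natCast_atTop_atTop)
    have hlog : ∀ᶠ n : ℕ in atTop, f n ≤ 1 - α*β + 2*δ := by
      filter_upwards [hEbound, hlow, eventually_gt_atTop 1,
        hJlog.eventually_lt_const hδ] with n hub hn hn1 hJd
      obtain ⟨hpos, _⟩ := hn
      have hn1R : (1:ℝ) < (n:ℝ) := by exact_mod_cast hn1
      have hn0R : (0:ℝ) < (n:ℝ) := by linarith
      have hlogn : 0 < Real.log n := Real.log_pos hn1R
      have hrp : (0:ℝ) < (n:ℝ) ^ (1 - α*β + (c + ε*β)) := Real.rpow_pos_of_pos hn0R _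
      have hloglog : Real.log (P {ω | (n : ℝ) ^ β ≤ ∑ k ∈ Finset.range n, V k ω}).toReal
          ≤ Real.log (((J:ℝ)+1) * (n:ℝ) ^ (1 - α*β + (c + ε*β))) :=
        Real.log_le_log hpos hub
      rw [Real.log_mul (ne_of_gt hJ1) (ne_of_gt hrp), Real.log_rpow hn0R] at hloglog
      have h3 : f n ≤ (Real.log ((J:ℝ)+1) + (1 - α*β + (c + ε*β)) * Real.log n)
          / Real.log n := by
        rw [hfdef]
        exact (div_le_div_iff_of_pos_right hlogn).mpr hloglog
      have heq : (Real.log ((J:ℝ)+1) + (1 - α*β + (c + ε*β)) * Real.log n) / Real.log n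
          = Real.log ((J:ℝ)+1)/Real.log n + (1 - α*β + (c + ε*β)) := by
        field_simp
      rw [heq] at h3
      linarith
    exact limsup_le_of_le hcob hlog
  by_contra hcon
  push_neg at hcon
  have hδpos : 0 < (limsup f atTop - (1 - α*β))/4 := by linarith
  have := key _ hδpos
  linarith
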